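/- Let f and g be two distinct s-sparse multilinear polynomials over GF(2) in n variables, both of degree at most d, and let p ≥ 1/2. If d ≥ ⌊log₂ s⌋ + 1 then Pr_{x ~ D_{n,p}}[f(x) ≠ g(x)] ≥ p^{d−⌊log₂ s⌋−1}(1−p)^{⌊log₂ s⌋+1}, and if d < ⌊log₂ s⌋ + 1 then Pr_{x ~ D_{n,p}}[f(x) ≠ g(x)] ≥ (1−p)^d. -/

import Mathlib

/-- Evaluation of a multilinear polynomial over GF(2), given by its set of
monomials, at a Boolean point: parity of the number of satisfied monomials. -/
def evalGF2 {n : ℕ} (P : Finset (Finset (Fin n))) (x : Fin n → Bool) : Bool :=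
  decide (Odd (P.filter (fun M => ∀ i ∈ M, x i = true)).card)

/-- Weight of a point `x ∈ {0,1}^n` under the `p`-product distribution. -/
noncomputable def prodWeight {n : ℕ} (p : ℝ) (x : Fin n → Bool) : ℝ :=
  ∏ i, (if x i then p else 1 - p)

/-- Probability under the `p`-product distribution `D_{n,p}` of an event. -/
noncomputable def prodProb {n : ℕ} (p : ℝ) (E : (Fin n → Bool) → Prop)
    [DecidablePred E] : ℝ :=
  ∑ x ∈ Finset.univ.filter (fun x : Fin n → Bool => E x), prodWeight p x

open Finset Function

namespace Stmt5

variable {n : ℕ}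

/-- restriction x_i = 0 -/
def res0 (P : Finset (Finset (Fin n))) (i : Fin n) : Finset (Finset (Fin n)) :=
  P.filter (fun M => i ∉ M)

/-- restriction x_i = 1 -/
def res1 (P : Finset (Finset (Fin n))) (i : Fin n) : Finset (Finset (Fin n)) :=
  symmDiff ((P.filter (fun M => i ∈ M)).image (fun M => M.erase i)) (res0 P i)

lemma parity_symmDiff {α : Type*} [DecidableEq α] (s t : Finset α) :
    (symmDiff s t).card + 2 * (s ∩ t).card = s.card + t.card := by
  have h1 : symmDiff s t = (s \ t) ∪ (t \ s) := rfl
  have hd : Disjoint (s \ t) (t \ s) := disjoint_sdiff_sdiff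
  have h2 := card_sdiff_add_card_inter s t
  have h3 := card_sdiff_add_card_inter t s
  rw [inter_comm] at h3
  rw [h1, card_union_of_disjoint hd]
  omega

lemma odd_symmDiff_card {α : Type*} [DecidableEq α] (s t : Finset α) :
    Odd (symmDiff s t).card ↔ ¬ (Odd s.card ↔ Odd t.card) := by
  have := parity_symmDiff s t
  simp only [Nat.odd_iff] at *
  omega

lemma filter_symmDiff' {α : Type*} [DecidableEq α] (s t : Finset α) (q : α → Prop)
    [DecidablePred q] :
    (symmDiff s t).filter q = symmDiff (s.filter q) (t.filter q) := by
  ext a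
  simp only [mem_filter, mem_symmDiff]
  tauto

/-- the satisfied-monomial filter -/
def sat (x : Fin n → Bool) (M : Finset (Fin n)) : Prop := ∀ i ∈ M, x i = true

instance (x : Fin n → Bool) : DecidablePred (sat x) := fun M => by
  unfold sat; infer_instance

lemma evalGF2_eq (P : Finset (Finset (Fin n))) (x : Fin n → Bool) :
    evalGF2 P x = decide (Odd (P.filter (sat x)).card) := rfl

lemma eval_res0 (P : Finset (Finset (Fin n))) (i : Fin n) (x : Fin n → Bool)
    (hx : x i = false) : evalGF2 P x = evalGF2 (res0 P i) x := by
  have : P.filter (sat x) = (res0 P i).filter (sat x) := by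
    ext M
    simp only [res0, mem_filter, and_assoc]
    constructor
    · intro ⟨h1, h2⟩
      refine ⟨h1, fun hi => ?_, h2⟩
      have := h2 i hi; rw [hx] at this; exact Bool.false_ne_true this
    · tauto
  rw [evalGF2_eq, evalGF2_eq, this]

lemma eval_res1 (P : Finset (Finset (Fin n))) (i : Fin n) (x : Fin n → Bool)
    (hx : x i = true) : evalGF2 P x = evalGF2 (res1 P i) x := by
  classical
  set A := P.filter (fun M => i ∈ M) with hA
  set B := res0 P i with hB
  set A' := A.image (fun M => M.erase i) with hA'
  -- injectivity of erase on A
  have hinj : Set.InjOn (fun M => M.erase i) (A : Set (Finset (Fin n))) := by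
    intro M hM N hN h
    simp only [hA, mem_coe, mem_filter] at hM hN
    simp only at h
    have : insert i (M.erase i) = insert i (N.erase i) := by rw [h]
    rwa [Finset.insert_erase hM.2, Finset.insert_erase hN.2] at this
  -- filter split of P
  have hsplit : (P.filter (sat x)).card
      = (A.filter (sat x)).card + (B.filter (sat x)).card := by
    rw [← card_union_of_disjoint]
    · congr 1
      ext M
      simp only [hA, hB, res0, mem_union, mem_filter]
      tauto
    · simp only [disjoint_left, hA, hB, res0, mem_filter]
      tauto
  -- A filter sat card = A' filter sat card
  have hAcard : (A.filter (sat x)).card = (A'.filter (sat x)).card := by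
    have h1 : A.filter (sat x) = A.filter (fun M => sat x (M.erase i)) := by
      apply filter_congr
      intro M hM
      simp only [hA, mem_filter] at hM
      simp only [sat, decide_eq_decide]
      constructor
      · intro h j hj; exact h j (Finset.mem_of_mem_erase hj)
      · intro h j hj
        by_cases hji : j = i
        · rw [hji, hx]
        · exact h j (Finset.mem_erase.mpr ⟨hji, hj⟩)
    have h2 : A'.filter (sat x) = (A.filter (fun M => sat x (M.erase i))).image
        (fun M => M.erase i) := by
      ext N
      simp only [hA', mem_filter, mem_image]
      constructor
      · rintro ⟨⟨M, hM, rfl⟩, hsat⟩; exact ⟨M, ⟨hM, hsat⟩, rfl⟩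
      · rintro ⟨M, ⟨hM, hsat⟩, rfl⟩; exact ⟨⟨M, hM, rfl⟩, hsat⟩
    rw [h1, h2, Finset.card_image_of_injOn]
    intro M hM N hN h
    exact hinj (mem_coe.mpr (mem_filter.mp (mem_coe.mp hM)).1) (mem_coe.mpr (mem_filter.mp (mem_coe.mp hN)).1) h
  -- now parity
  have hfil : (res1 P i).filter (sat x) = symmDiff (A'.filter (sat x)) (B.filter (sat x)) := by
    rw [res1, ← hA', ← hB]; exact filter_symmDiff' _ _ _
  rw [evalGF2_eq, evalGF2_eq, hfil]
  have hpar := parity_symmDiff (A'.filter (sat x)) (B.filter (sat x))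
  rw [decide_eq_decide]
  rw [hsplit, hAcard]
  simp only [Nat.odd_iff] at *
  omega

end Stmt5

namespace Stmt5

/-- The "success probability" of a polynomial: Pr[eval = 1], as a plain sum. -/
noncomputable def S (p : ℝ) (P : Finset (Finset (Fin n))) : ℝ :=
  ∑ x : Fin n → Bool, (if evalGF2 P x = true then prodWeight p x else 0)

noncomputable def w' (p : ℝ) (i : Fin n) (x : Fin n → Bool) : ℝ :=
  ∏ j ∈ univ.erase i, (if x j then p else 1 - p)

lemma prodWeight_split (p : ℝ) (i : Fin n) (x : Fin n → Bool) :
    prodWeight p x = (if x i then p else 1 - p) * w' p i x :=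
  (Finset.mul_prod_erase univ _ (mem_univ i)).symm

lemma w'_update (p : ℝ) (i : Fin n) (x : Fin n → Bool) (b : Bool) :
    w' p i (Function.update x i b) = w' p i x := by
  apply Finset.prod_congr rfl
  intro j hj
  rw [Function.update_of_ne (mem_erase.mp hj).1]

lemma eval_update (P : Finset (Finset (Fin n))) (i : Fin n)
    (hP : ∀ M ∈ P, i ∉ M) (x : Fin n → Bool) (b : Bool) :
    evalGF2 P (Function.update x i b) = evalGF2 P x := by
  rw [evalGF2_eq, evalGF2_eq]
  have : P.filter (sat (Function.update x i b)) = P.filter (sat x) := by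
    apply filter_congr
    intro M hM
    simp only [sat]
    constructor <;> intro h j hj
    · have := h j hj
      rwa [Function.update_of_ne (fun hji : j = i => hP M hM (hji ▸ hj))] at this
    · rw [Function.update_of_ne (fun hji : j = i => hP M hM (hji ▸ hj))]
      exact h j hj
  rw [this]

lemma res0_avoid (P : Finset (Finset (Fin n))) (i : Fin n) :
    ∀ M ∈ res0 P i, i ∉ M := fun M hM => (mem_filter.mp hM).2

lemma res1_avoid (P : Finset (Finset (Fin n))) (i : Fin n) :
    ∀ M ∈ res1 P i, i ∉ M := by
  intro M hM
  rw [res1, Finset.mem_symmDiff] at hM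
  rcases hM with ⟨hM, -⟩ | ⟨hM, -⟩
  · rcases mem_image.mp hM with ⟨N, -, rfl⟩
    exact Finset.notMem_erase i N
  · exact res0_avoid P i M hM

lemma flip_sum (i : Fin n) (G : (Fin n → Bool) → ℝ)
    (hG : ∀ x b, G (Function.update x i b) = G x) :
    (∑ x : Fin n → Bool, if x i = true then G x else 0)
      = ∑ x : Fin n → Bool, if x i = false then G x else 0 := by
  have hinv : Function.Involutive (fun x : Fin n → Bool => Function.update x i (!(x i))) := by
    intro x; funext j
    by_cases hj : j = i
    · subst hj; simp
    · simp [Function.update_of_ne hj]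
  let σ := hinv.toPerm _
  have hσ : ∀ x : Fin n → Bool, σ x = Function.update x i (!(x i)) := fun x => rfl
  calc (∑ x : Fin n → Bool, if x i = true then G x else 0)
      = ∑ x : Fin n → Bool, if (σ x) i = true then G (σ x) else 0 :=
        (Equiv.sum_comp σ (fun x => if x i = true then G x else 0)).symm
    _ = ∑ x : Fin n → Bool, if x i = false then G x else 0 := by
        apply Finset.sum_congr rfl
        intro x _
        rw [hσ, hG, Function.update_self]
        cases hx : x i <;> simp [hx]

/-- For a polynomial avoiding variable i, S equals the "i set to 0, weight w'" sum. -/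
lemma S_indep (p : ℝ) (Q : Finset (Finset (Fin n))) (i : Fin n) (hQ : ∀ M ∈ Q, i ∉ M) :
    S p Q = ∑ x : Fin n → Bool,
      (if x i = false then (if evalGF2 Q x = true then w' p i x else 0) else 0) := by
  set G : (Fin n → Bool) → ℝ := fun x => if evalGF2 Q x = true then w' p i x else 0 with hGdef
  have hG : ∀ x b, G (Function.update x i b) = G x := by
    intro x b
    simp only [hGdef, eval_update Q i hQ, w'_update]
  have key : S p Q = p * (∑ x : Fin n → Bool, if x i = true then G x else 0)
      + (1 - p) * (∑ x : Fin n → Bool, if x i = false then G x else 0) := by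
    rw [S, Finset.mul_sum, Finset.mul_sum, ← Finset.sum_add_distrib]
    apply Finset.sum_congr rfl
    intro x _
    rw [prodWeight_split p i]
    simp only [hGdef]
    cases hx : x i <;> simp [hx] <;> ring
  rw [key, flip_sum i G hG]
  ring

lemma S_decomp (p : ℝ) (P : Finset (Finset (Fin n))) (i : Fin n) :
    S p P = (1 - p) * S p (res0 P i) + p * S p (res1 P i) := by
  set G0 : (Fin n → Bool) → ℝ := fun x => if evalGF2 (res0 P i) x = true then w' p i x else 0
    with hG0
  set G1 : (Fin n → Bool) → ℝ := fun x => if evalGF2 (res1 P i) x = true then w' p i x else 0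
    with hG1
  have hg1 : ∀ x b, G1 (Function.update x i b) = G1 x := by
    intro x b
    simp only [hG1, eval_update _ i (res1_avoid P i), w'_update]
  have key : S p P = p * (∑ x : Fin n → Bool, if x i = true then G1 x else 0)
      + (1 - p) * (∑ x : Fin n → Bool, if x i = false then G0 x else 0) := by
    rw [S, Finset.mul_sum, Finset.mul_sum, ← Finset.sum_add_distrib]
    apply Finset.sum_congr rfl
    intro x _
    rw [prodWeight_split p i]
    simp only [hG0, hG1]
    cases hx : x i
    · rw [eval_res0 P i x hx]
      simp [hx, mul_ite, mul_zero]
    · rw [eval_res1 P i x hx]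
      simp [hx, mul_ite, mul_zero]
  rw [key, flip_sum i G1 hg1, ← S_indep p (res1 P i) i (res1_avoid P i),
    ← S_indep p (res0 P i) i (res0_avoid P i)]
  ring

lemma sum_prodWeight (p : ℝ) : ∑ x : Fin n → Bool, prodWeight p x = 1 := by
  unfold prodWeight
  rw [← Fintype.prod_sum (fun (_ : Fin n) (b : Bool) => if b then p else 1 - p)]
  have : ∀ i : Fin n, (∑ b : Bool, if b then p else 1 - p) = 1 := by
    intro i; rw [Fintype.sum_bool]; simp
  calc ∏ i : Fin n, (∑ b : Bool, if b then p else 1 - p) = ∏ i : Fin n, (1:ℝ) :=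
        Finset.prod_congr rfl (fun i _ => this i)
    _ = 1 := Finset.prod_const_one

lemma S_singleton_empty (p : ℝ) : S p ({∅} : Finset (Finset (Fin n))) = 1 := by
  have h : ∀ x : Fin n → Bool, evalGF2 ({∅} : Finset (Finset (Fin n))) x = true := by
    intro x
    rw [evalGF2_eq]
    have : ({∅} : Finset (Finset (Fin n))).filter (sat x) = {∅} := by
      apply filter_true_of_mem
      intro M hM
      rw [mem_singleton] at hM
      subst hM
      intro j hj
      exact absurd hj (Finset.notMem_empty j)
    rw [this, card_singleton]
    simp [Nat.odd_iff]
  rw [S]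
  calc (∑ x : Fin n → Bool, if evalGF2 ({∅} : Finset (Finset (Fin n))) x = true
          then prodWeight p x else 0)
      = ∑ x : Fin n → Bool, prodWeight p x :=
        Finset.sum_congr rfl (fun x _ => by rw [h x, if_pos rfl])
    _ = 1 := sum_prodWeight p

lemma S_empty (p : ℝ) : S p (∅ : Finset (Finset (Fin n))) = 0 := by
  rw [S]
  apply Finset.sum_eq_zero
  intro x _
  rw [evalGF2_eq]
  simp [Nat.odd_iff]

end Stmt5

namespace Stmt5

lemma bound_le_one (p : ℝ) (hp0 : 0 ≤ 1 - p) (hp : 1 - p ≤ p) (hp1 : p ≤ 1) (a b : ℕ) :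
    p ^ a * (1 - p) ^ b ≤ 1 := by
  have h0p : (0:ℝ) ≤ p := le_trans hp0 hp
  have h1 : p ^ a ≤ 1 := pow_le_one₀ h0p hp1
  have h2 : (1 - p) ^ b ≤ 1 := pow_le_one₀ hp0 (by linarith)
  calc p ^ a * (1 - p) ^ b ≤ 1 * 1 :=
        mul_le_mul h1 h2 (pow_nonneg hp0 b) zero_le_one
    _ = 1 := by ring

lemma bound_mono (p : ℝ) (hp0 : 0 ≤ 1 - p) (hp : 1 - p ≤ p) {d m m' : ℕ}
    (h1 : m' ≤ m) (h2 : m ≤ d) :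
    p ^ (d - m) * (1 - p) ^ m ≤ p ^ (d - m') * (1 - p) ^ m' := by
  have h0p : (0:ℝ) ≤ p := le_trans hp0 hp
  calc p ^ (d - m) * (1 - p) ^ m
      = p ^ (d - m) * ((1 - p) ^ (m - m') * (1 - p) ^ m') := by
        rw [← pow_add]; congr 2; omega
    _ ≤ p ^ (d - m) * (p ^ (m - m') * (1 - p) ^ m') := by
        apply mul_le_mul_of_nonneg_left _ (pow_nonneg h0p _)
        exact mul_le_mul_of_nonneg_right (pow_le_pow_left₀ hp0 hp _)
          (pow_nonneg hp0 _)
    _ = p ^ (d - m') * (1 - p) ^ m' := by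
        rw [← mul_assoc, ← pow_add]; congr 2; omega

lemma vars_res0 (P : Finset (Finset (Fin n))) (i : Fin n) :
    (res0 P i).biUnion id ⊆ (P.biUnion id).erase i := by
  intro j hj
  rcases Finset.mem_biUnion.mp hj with ⟨M, hM, hjM⟩
  rw [res0, mem_filter] at hM
  rw [mem_erase]
  exact ⟨fun hji => hM.2 (hji ▸ hjM), Finset.mem_biUnion.mpr ⟨M, hM.1, hjM⟩⟩

lemma vars_res1 (P : Finset (Finset (Fin n))) (i : Fin n) :
    (res1 P i).biUnion id ⊆ (P.biUnion id).erase i := by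
  intro j hj
  rcases Finset.mem_biUnion.mp hj with ⟨M, hM, hjM⟩
  have hji : j ≠ i := fun h => res1_avoid P i M hM (h ▸ hjM)
  rw [res1, Finset.mem_symmDiff] at hM
  rw [mem_erase]
  refine ⟨hji, Finset.mem_biUnion.mpr ?_⟩
  rcases hM with ⟨hM, -⟩ | ⟨hM, -⟩
  · rcases mem_image.mp hM with ⟨N, hN, rfl⟩
    exact ⟨N, (mem_filter.mp hN).1, Finset.mem_of_mem_erase hjM⟩
  · exact ⟨M, (mem_filter.mp hM).1, hjM⟩

lemma erase_inj_on (P : Finset (Finset (Fin n))) (i : Fin n) :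
    Set.InjOn (fun M => M.erase i) ((P.filter (fun M => i ∈ M)) : Set (Finset (Fin n))) := by
  intro M hM N hN h
  simp only [mem_coe, mem_filter] at hM hN
  simp only at h
  have : insert i (M.erase i) = insert i (N.erase i) := by rw [h]
  rwa [Finset.insert_erase hM.2, Finset.insert_erase hN.2] at this

/-- The main lemma: a nonzero `t`-sparse degree-`d` GF(2) polynomial has
`Pr[f = 1] ≥ p^(d-m) (1-p)^m` where `m = min d ⌊log₂ t⌋`. -/
lemma main (p : ℝ) (hp0 : 0 ≤ 1 - p) (hp : 1 - p ≤ p) (hp1 : p ≤ 1) :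
    ∀ V : ℕ, ∀ d : ℕ, ∀ P : Finset (Finset (Fin n)), (P.biUnion id).card ≤ V →
      P.Nonempty → (∀ M ∈ P, M.card ≤ d) →
      p ^ (d - min d (Nat.log 2 P.card)) * (1 - p) ^ (min d (Nat.log 2 P.card)) ≤ S p P := by
  have h0p : (0:ℝ) ≤ p := le_trans hp0 hp
  intro V
  induction V with
  | zero =>
    intro d P hV hne hdeg
    have hP : P = {∅} := by
      apply Finset.Subset.antisymm
      · intro M hM
        rw [mem_singleton]
        by_contra hMne
        rcases Finset.nonempty_iff_ne_empty.mpr hMne with ⟨j, hj⟩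
        have : j ∈ P.biUnion id := Finset.mem_biUnion.mpr ⟨M, hM, hj⟩
        rw [Finset.card_eq_zero.mp (Nat.le_zero.mp hV)] at this
        exact absurd this (Finset.notMem_empty j)
      · rcases hne with ⟨M, hM⟩
        intro N hN
        rw [mem_singleton] at hN
        subst hN
        -- M must be ∅
        by_cases hMe : M = ∅
        · rwa [← hMe]
        · exfalso
          rcases Finset.nonempty_iff_ne_empty.mpr hMe with ⟨j, hj⟩
          have : j ∈ P.biUnion id := Finset.mem_biUnion.mpr ⟨M, hM, hj⟩
          rw [Finset.card_eq_zero.mp (Nat.le_zero.mp hV)] at this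
          exact absurd this (Finset.notMem_empty j)
    rw [hP, S_singleton_empty]
    exact bound_le_one p hp0 hp hp1 _ _
  | succ V ih =>
    intro d P hV hne hdeg
    by_cases hP : P = {∅}
    · rw [hP, S_singleton_empty]
      exact bound_le_one p hp0 hp hp1 _ _
    -- find a variable i in some monomial
    have hex : ∃ M ∈ P, M.Nonempty := by
      by_contra hc
      push_neg at hc
      apply hP
      apply Finset.Subset.antisymm
      · intro M hM
        rw [mem_singleton]
        rw [← Finset.not_nonempty_iff_eq_empty]
        exact Finset.not_nonempty_iff_eq_empty.mpr (hc M hM)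
      · rcases hne with ⟨M, hM⟩
        have : M = ∅ := hc M hM
        intro N hN
        rw [mem_singleton] at hN
        subst hN
        rwa [← this]
    rcases hex with ⟨M₀, hM₀, i, hi⟩
    have hd1 : 1 ≤ d := le_trans (Finset.card_pos.mpr ⟨i, hi⟩) (hdeg M₀ hM₀)
    set A := P.filter (fun M => i ∈ M) with hA
    set A' := A.image (fun M => M.erase i) with hA'
    have hres1A : res1 P i = symmDiff A' (res0 P i) := rfl
    have hta : 1 ≤ A.card := Finset.card_pos.mpr ⟨M₀, mem_filter.mpr ⟨hM₀, hi⟩⟩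
    have hA'card : A'.card = A.card := Finset.card_image_of_injOn (erase_inj_on P i)
    have hsum : A.card + (res0 P i).card = P.card := by
      rw [hA, res0]
      exact Finset.card_filter_add_card_filter_not _
    have hiV : i ∈ P.biUnion id := Finset.mem_biUnion.mpr ⟨M₀, hM₀, hi⟩
    have hVerase : ((P.biUnion id).erase i).card ≤ V := by
      rw [Finset.card_erase_of_mem hiV]
      omega
    have hV0 : ((res0 P i).biUnion id).card ≤ V :=
      le_trans (Finset.card_le_card (vars_res0 P i)) hVerase
    have hV1 : ((res1 P i).biUnion id).card ≤ V :=
      le_trans (Finset.card_le_card (vars_res1 P i)) hVerase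
    have hdeg0 : ∀ M ∈ res0 P i, M.card ≤ d := fun M hM => hdeg M (mem_filter.mp hM).1
    have hdegA' : ∀ M ∈ A', M.card ≤ d - 1 := by
      intro M hM
      rcases mem_image.mp hM with ⟨N, hN, rfl⟩
      rw [mem_filter] at hN
      rw [Finset.card_erase_of_mem hN.2]
      have := hdeg N hN.1
      omega
    have hdeg1 : ∀ M ∈ res1 P i, M.card ≤ d := by
      intro M hM
      rw [hres1A, Finset.mem_symmDiff] at hM
      rcases hM with ⟨hM, -⟩ | ⟨hM, -⟩
      · have := hdegA' M hM; omega
      · exact hdeg0 M hM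
    rw [S_decomp p P i]
    by_cases h0 : res0 P i = ∅
    · -- Case A : the x_i = 0 branch is zero, all monomials contain i
      have hres1 : res1 P i = A' := by
        rw [hres1A, h0]
        exact symmDiff_bot A'
      have h0c : (res0 P i).card = 0 := by rw [h0]; rfl
      have hcard1 : (res1 P i).card = P.card := by rw [hres1, hA'card]; omega
      have hne1 : (res1 P i).Nonempty := by
        rw [← Finset.card_pos, hcard1]
        exact Finset.card_pos.mpr hne
      have hdeg1' : ∀ M ∈ res1 P i, M.card ≤ d - 1 := by rw [hres1]; exact hdegA'
      have hIH := ih (d - 1) (res1 P i) hV1 hne1 hdeg1'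
      rw [hcard1] at hIH
      set m' := min (d - 1) (Nat.log 2 P.card) with hm'
      set m := min d (Nat.log 2 P.card) with hm
      have hstep : p ^ (d - m') * (1 - p) ^ m' ≤ p * S p (res1 P i) := by
        have : p ^ (d - m') = p * p ^ (d - 1 - m') := by
          rw [← pow_succ']; congr 1; omega
        rw [this, mul_assoc]
        exact mul_le_mul_of_nonneg_left hIH h0p
      have hmono : p ^ (d - m) * (1 - p) ^ m ≤ p ^ (d - m') * (1 - p) ^ m' :=
        bound_mono p hp0 hp (by omega) (by omega)
      rw [h0, S_empty]
      calc p ^ (d - m) * (1 - p) ^ m ≤ p * S p (res1 P i) := le_trans hmono hstep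
        _ = (1 - p) * 0 + p * S p (res1 P i) := by ring
    · by_cases h1 : res1 P i = ∅
      · -- Case B : the x_i = 1 branch cancels completely: A' = res0 P i
        have hAB : A' = res0 P i := by
          have := hres1A ▸ h1
          exact symmDiff_eq_bot.mp this
        have hcard0 : 2 * (res0 P i).card = P.card := by
          have hcc : (res0 P i).card = A.card := by rw [← hAB, hA'card]
          omega
        have hne0 : (res0 P i).Nonempty := Finset.nonempty_iff_ne_empty.mpr h0
        have hdeg0' : ∀ M ∈ res0 P i, M.card ≤ d - 1 := by rw [← hAB]; exact hdegA'
        have hIH := ih (d - 1) (res0 P i) hV0 hne0 hdeg0'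
        have htb : 1 ≤ (res0 P i).card := Finset.card_pos.mpr hne0
        have hlog : Nat.log 2 P.card = Nat.log 2 (res0 P i).card + 1 := by
          rw [← hcard0, mul_comm]
          exact Nat.log_mul_base (by norm_num) (by omega)
        set m' := min (d - 1) (Nat.log 2 (res0 P i).card) with hm'
        set m := min d (Nat.log 2 P.card) with hm
        have hmm : m = m' + 1 := by omega
        rw [h1, S_empty]
        calc p ^ (d - m) * (1 - p) ^ m
            = (1 - p) * (p ^ (d - 1 - m') * (1 - p) ^ m') := by
              rw [hmm]; rw [pow_succ]
              have : d - (m' + 1) = d - 1 - m' := by omega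
              rw [this]; ring
          _ ≤ (1 - p) * S p (res0 P i) := mul_le_mul_of_nonneg_left hIH hp0
          _ = (1 - p) * S p (res0 P i) + p * 0 := by ring
      · -- Case C : both branches nonzero
        have hne0 : (res0 P i).Nonempty := Finset.nonempty_iff_ne_empty.mpr h0
        have hne1 : (res1 P i).Nonempty := Finset.nonempty_iff_ne_empty.mpr h1
        have hc0 : (res0 P i).card ≤ P.card :=
          Finset.card_le_card (Finset.filter_subset _ _)
        have hc1 : (res1 P i).card ≤ P.card := by
          have hsub : res1 P i ⊆ A' ∪ res0 P i := by
            rw [hres1A]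
            intro M hM
            rw [Finset.mem_symmDiff] at hM
            rw [mem_union]
            tauto
          calc (res1 P i).card ≤ (A' ∪ res0 P i).card := Finset.card_le_card hsub
            _ ≤ A'.card + (res0 P i).card := Finset.card_union_le _ _
            _ ≤ P.card := by omega
        set m := min d (Nat.log 2 P.card) with hm
        have hB0 : p ^ (d - m) * (1 - p) ^ m ≤ S p (res0 P i) := by
          refine le_trans (bound_mono p hp0 hp ?_ ?_) (ih d (res0 P i) hV0 hne0 hdeg0)
          · exact min_le_min le_rfl (Nat.log_mono_right hc0)
          · omega
        have hB1 : p ^ (d - m) * (1 - p) ^ m ≤ S p (res1 P i) := by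
          refine le_trans (bound_mono p hp0 hp ?_ ?_) (ih d (res1 P i) hV1 hne1 hdeg1)
          · exact min_le_min le_rfl (Nat.log_mono_right hc1)
          · omega
        calc p ^ (d - m) * (1 - p) ^ m
            = (1 - p) * (p ^ (d - m) * (1 - p) ^ m) + p * (p ^ (d - m) * (1 - p) ^ m) := by
              ring
          _ ≤ (1 - p) * S p (res0 P i) + p * S p (res1 P i) := by
              apply add_le_add
              · exact mul_le_mul_of_nonneg_left hB0 hp0
              · exact mul_le_mul_of_nonneg_left hB1 h0p

end Stmt5

namespace Stmt5

lemma eval_ne_iff (P Q : Finset (Finset (Fin n))) (x : Fin n → Bool) :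
    (evalGF2 P x ≠ evalGF2 Q x) ↔ evalGF2 (symmDiff P Q) x = true := by
  rw [evalGF2_eq, evalGF2_eq, evalGF2_eq, ne_eq, decide_eq_decide, decide_eq_true_iff,
    filter_symmDiff']
  rw [odd_symmDiff_card]

theorem stmt5' {n d s : ℕ} (P Q : Finset (Finset (Fin n))) (hPQ : P ≠ Q)
    (hsP : P.card ≤ s) (hsQ : Q.card ≤ s)
    (hdP : ∀ M ∈ P, M.card ≤ d) (hdQ : ∀ M ∈ Q, M.card ≤ d)
    (p : ℝ) (hp : 1 / 2 ≤ p) (hp1 : p ≤ 1) :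
    (Nat.log 2 s + 1 ≤ d →
      prodProb p (fun x => evalGF2 P x ≠ evalGF2 Q x) ≥
        p ^ (d - Nat.log 2 s - 1) * (1 - p) ^ (Nat.log 2 s + 1)) ∧
    (d < Nat.log 2 s + 1 →
      prodProb p (fun x => evalGF2 P x ≠ evalGF2 Q x) ≥ (1 - p) ^ d) := by
  have hp0 : 0 ≤ 1 - p := by linarith
  have hp' : 1 - p ≤ p := by linarith
  set R := symmDiff P Q with hR
  have hprob : prodProb p (fun x => evalGF2 P x ≠ evalGF2 Q x) = S p R := by
    rw [prodProb, S, Finset.sum_filter]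
    apply Finset.sum_congr rfl
    intro x _
    apply if_congr (eval_ne_iff P Q x) rfl rfl
  have hRne : R.Nonempty := by
    rw [Finset.nonempty_iff_ne_empty]
    intro hc
    exact hPQ (symmDiff_eq_bot.mp hc)
  have hs1 : 1 ≤ s := by
    rcases Nat.eq_zero_or_pos s with hs | hs
    · exfalso
      subst hs
      apply hPQ
      rw [Finset.card_eq_zero.mp (Nat.le_zero.mp hsP), Finset.card_eq_zero.mp (Nat.le_zero.mp hsQ)]
    · exact hs
  have hRcard : R.card ≤ 2 * s := by
    have hsub : R ⊆ P ∪ Q := by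
      intro M hM
      rw [hR, Finset.mem_symmDiff] at hM
      rw [mem_union]
      tauto
    calc R.card ≤ (P ∪ Q).card := Finset.card_le_card hsub
      _ ≤ P.card + Q.card := Finset.card_union_le _ _
      _ ≤ 2 * s := by omega
  have hRdeg : ∀ M ∈ R, M.card ≤ d := by
    intro M hM
    rw [hR, Finset.mem_symmDiff] at hM
    rcases hM with ⟨hM, -⟩ | ⟨hM, -⟩
    · exact hdP M hM
    · exact hdQ M hM
  have hlog2s : Nat.log 2 (2 * s) = Nat.log 2 s + 1 := by
    rw [mul_comm]
    exact Nat.log_mul_base (by norm_num) (by omega)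
  have hlogR : Nat.log 2 R.card ≤ Nat.log 2 s + 1 := by
    rw [← hlog2s]
    exact Nat.log_mono_right hRcard
  have hmain := main p hp0 hp' hp1 ((R.biUnion id).card) d R le_rfl hRne hRdeg
  set m := min d (Nat.log 2 R.card) with hm
  rw [hprob]
  constructor
  · intro hd
    have h1 : d - Nat.log 2 s - 1 = d - (Nat.log 2 s + 1) := by omega
    rw [h1]
    refine le_trans (bound_mono p hp0 hp' (m := Nat.log 2 s + 1) ?_ ?_) hmain
    · omega
    · exact hd
  · intro hd
    have h2 : (1 - p) ^ d = p ^ (d - d) * (1 - p) ^ d := by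
      rw [Nat.sub_self, pow_zero, one_mul]
    rw [h2]
    refine le_trans (bound_mono p hp0 hp' (m := d) ?_ le_rfl) hmain
    omega

end Stmt5


/-- for two distinct `s`-sparse degree-`d` polynomials `f, g`
over GF(2) and `p ≥ 1/2`: if `d ≥ ⌊log₂ s⌋ + 1` then
`Pr_{D_{n,p}}[f ≠ g] ≥ p^{d-⌊log₂ s⌋-1}(1-p)^{⌊log₂ s⌋+1}`,
and if `d < ⌊log₂ s⌋ + 1` then `Pr_{D_{n,p}}[f ≠ g] ≥ (1-p)^d`. -/
theorem stmt5 {n d s : ℕ} (P Q : Finset (Finset (Fin n))) (hPQ : P ≠ Q)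
    (hsP : P.card ≤ s) (hsQ : Q.card ≤ s)
    (hdP : ∀ M ∈ P, M.card ≤ d) (hdQ : ∀ M ∈ Q, M.card ≤ d)
    (p : ℝ) (hp : 1 / 2 ≤ p) (hp1 : p ≤ 1) :
    (Nat.log 2 s + 1 ≤ d →
      prodProb p (fun x => evalGF2 P x ≠ evalGF2 Q x) ≥
        p ^ (d - Nat.log 2 s - 1) * (1 - p) ^ (Nat.log 2 s + 1)) ∧
    (d < Nat.log 2 s + 1 →
      prodProb p (fun x => evalGF2 P x ≠ evalGF2 Q x) ≥ (1 - p) ^ d) :=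
  Stmt5.stmt5' P Q hPQ hsP hsQ hdP hdQ p hp hp1
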